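/- For every c > 0, lim_{t→∞} η(ct)/η(t) = 1. -/

import Mathlib

open Set Filter Topology

/-- Hypotheses (P1)–(P3) on `φ(t) = η(t)·t`. -/
def PhiHyp (φ η : ℝ → ℝ) (Lam0 : ℝ) : Prop :=
  (∀ t : ℝ, 0 ≤ t → φ t = η t * t) ∧
  (∀ t : ℝ, 0 ≤ t → 1 ≤ η t) ∧
  MonotoneOn φ (Set.Ici 0) ∧
  (∀ t₀ : ℝ, 0 < t₀ → ∃ ε > (0 : ℝ), ∃ K : NNReal,
    LipschitzOnWith K φ (Set.Ioo (t₀ - ε) (t₀ + ε))) ∧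
  (∀ t : ℝ, 0 ≤ t → t ≤ φ t) ∧
  AntitoneOn η (Set.Ioo 0 1) ∧
  MonotoneOn η (Set.Ici 1) ∧
  (∃ T : ℝ, ∀ t : ℝ, T ≤ t → DifferentiableAt ℝ η t) ∧
  Filter.Tendsto (fun t => t * deriv η t / η t * Real.log (η t)) Filter.atTop (nhds 0) ∧
  0 < Lam0 ∧
  (∀ s t : ℝ, 0 < s → 0 < t → η (s * t) ≤ Lam0 * η s * η t)

/-- Lemma 2.4 (i): for every `c > 0`, `lim_{t→∞} η(ct)/η(t) = 1`. -/
theorem statement1 (φ η : ℝ → ℝ) (Lam0 : ℝ) (hφ : PhiHyp φ η Lam0) :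
    ∀ c : ℝ, 0 < c →
      Filter.Tendsto (fun t => η (c * t) / η t) Filter.atTop (nhds 1) := by
  obtain ⟨hφη, hη1, hφmono, hlip, hle, hanti, hmono, ⟨T, hdiff⟩, hlim, hΛ, hsub⟩ := hφ
  intro c hc
  -- the monotone extension of η
  set m : ℝ → ℝ := fun t => η (max t 1) with hm
  have hmmono : Monotone m := fun a b hab =>
    hmono (le_max_right a 1) (le_max_right b 1) (max_le_max hab le_rfl)
  have hmeq : η =ᶠ[atTop] m := by
    filter_upwards [eventually_ge_atTop (1:ℝ)] with t ht
    simp [hm, max_eq_left ht]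
  by_cases hb : BddAbove (Set.range m)
  · -- bounded case: η converges to a positive limit
    have hL := tendsto_atTop_ciSup hmmono hb
    set L := ⨆ t, m t with hLdef
    have hηL : Tendsto η atTop (𝓝 L) := hL.congr' hmeq.symm
    have hcL : Tendsto (fun t => η (c * t)) atTop (𝓝 L) :=
      hηL.comp (tendsto_id.const_mul_atTop hc)
    have hL1 : (1:ℝ) ≤ L := by
      have h1 : η 1 ≤ L := by
        have := le_ciSup hb (1:ℝ)
        simpa [hm] using this
      exact le_trans (hη1 1 zero_le_one) h1
    have hLne : L ≠ 0 := by linarith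
    have := hcL.div hηL hLne
    rwa [div_self hLne] at this
  · -- unbounded case: η → ∞
    have hmtop : Tendsto m atTop atTop := tendsto_atTop_atTop_of_monotone' hmmono hb
    have hηtop : Tendsto η atTop atTop := hmtop.congr' hmeq.symm
    have hlogtop : Tendsto (fun t => Real.log (η t)) atTop atTop :=
      Real.tendsto_log_atTop.comp hηtop
    have h1 : Tendsto (fun t => t * deriv η t / η t) atTop (𝓝 0) := by
      apply squeeze_zero_norm' ?_ (by simpa using hlim.abs)
      filter_upwards [hlogtop.eventually_ge_atTop 1] with t ht
      have : ‖t * deriv η t / η t‖ * 1 ≤ ‖t * deriv η t / η t‖ * |Real.log (η t)| := by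
        apply mul_le_mul_of_nonneg_left (le_trans ht (le_abs_self _)) (norm_nonneg _)
      calc ‖t * deriv η t / η t‖ = ‖t * deriv η t / η t‖ * 1 := by ring
        _ ≤ ‖t * deriv η t / η t‖ * |Real.log (η t)| := this
        _ = |t * deriv η t / η t * Real.log (η t)| := by rw [abs_mul]; rfl
      exact (abs_mul _ _).le
    set a := Real.log c with ha
    set F : ℝ → ℝ := fun x => Real.log (η (Real.exp x)) with hF
    set G : ℝ → ℝ := fun x => Real.exp x * deriv η (Real.exp x) / η (Real.exp x) with hG
    have hFd : ∀ᶠ x in atTop, HasDerivAt F (G x) x := by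
      filter_upwards [Real.tendsto_exp_atTop.eventually_ge_atTop T,
        Real.tendsto_exp_atTop.eventually_ge_atTop 0] with x hxT hx0
      have hpos : 0 < η (Real.exp x) := lt_of_lt_of_le one_pos (hη1 _ hx0)
      have hd1 : HasDerivAt (fun y => η (Real.exp y)) (deriv η (Real.exp x) * Real.exp x) x :=
        ((hdiff _ hxT).hasDerivAt).comp x (Real.hasDerivAt_exp x)
      have hd2 := (Real.hasDerivAt_log (ne_of_gt hpos)).comp x hd1
      convert hd2 using 1
      · rfl
      · rfl
      · rfl
      · rw [hG]
        ring
    have hG0 : Tendsto G atTop (𝓝 0) := h1.comp Real.tendsto_exp_atTop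
    have hD : Tendsto (fun x => F (x + a) - F x) atTop (𝓝 0) := by
      rw [Metric.tendsto_atTop]
      intro ε hε
      have hε' : 0 < ε / (2 * (|a| + 1)) := by positivity
      obtain ⟨N1, hN1⟩ := Metric.tendsto_atTop.mp hG0 _ hε'
      obtain ⟨N2, hN2⟩ := eventually_atTop.mp hFd
      refine ⟨max N1 N2 + |a|, fun x hx => ?_⟩
      set N := max N1 N2 with hN
      have hconv : Convex ℝ (Set.Ici N) := convex_Ici N
      have hder : ∀ y ∈ Set.Ici N, HasDerivWithinAt F (G y) (Set.Ici N) y :=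
        fun y hy => (hN2 y (le_trans (le_max_right _ _) hy)).hasDerivWithinAt
      have hbnd : ∀ y ∈ Set.Ici N, ‖G y‖ ≤ ε / (2 * (|a| + 1)) := by
        intro y hy
        have := hN1 y (le_trans (le_max_left _ _) hy)
        rw [Real.dist_eq, sub_zero] at this
        exact le_of_lt this
      have hx1 : x ∈ Set.Ici N := le_trans (le_add_of_nonneg_right (abs_nonneg a)) hx
      have hx2 : x + a ∈ Set.Ici N := by
        have h3 := neg_abs_le a
        have : N + |a| ≤ x := hx
        simp only [Set.mem_Ici]
        linarith
      have hmv := hconv.norm_image_sub_le_of_norm_hasDerivWithin_le hder hbnd hx1 hx2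
      rw [Real.dist_eq, sub_zero]
      have hsimp : ‖x + a - x‖ = |a| := by rw [Real.norm_eq_abs]; congr 1; ring
      rw [hsimp] at hmv
      have key : ε / (2 * (|a| + 1)) * |a| < ε := by
        rw [div_mul_eq_mul_div, div_lt_iff₀ (by positivity)]
        nlinarith [abs_nonneg a]
      calc |F (x + a) - F x| ≤ ε / (2 * (|a| + 1)) * |a| := hmv
        _ < ε := key
    have hDlog : Tendsto (fun t => F (Real.log t + a) - F (Real.log t)) atTop (𝓝 0) :=
      hD.comp Real.tendsto_log_atTop
    have hexp : Tendsto (fun t => Real.exp (F (Real.log t + a) - F (Real.log t))) atTop (𝓝 1) := by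
      have := (Real.continuous_exp.tendsto 0).comp hDlog
      simpa [Function.comp_def] using this
    refine hexp.congr' ?_
    filter_upwards [eventually_ge_atTop (1:ℝ)] with t ht
    have ht0 : (0:ℝ) < t := lt_of_lt_of_le one_pos ht
    have hct0 : 0 < c * t := mul_pos hc ht0
    have he1 : Real.exp (Real.log t) = t := Real.exp_log ht0
    have he2 : Real.exp (Real.log t + a) = c * t := by
      rw [Real.exp_add, he1, ha, Real.exp_log hc, mul_comm]
    have hηt : 0 < η t := lt_of_lt_of_le one_pos (hη1 t ht0.le)
    have hηct : 0 < η (c * t) := lt_of_lt_of_le one_pos (hη1 _ hct0.le)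
    simp only [hF, he1, he2]
    rw [Real.exp_sub, Real.exp_log hηct, Real.exp_log hηt]
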